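/- Let Y ⊆ ℝ^d be compact, let ν be a Borel probability measure on Y with full support, and let ε > 0. For a continuous function ψ : Y → ℝ define S(ψ)(y₀) := ε·log ∫_Y exp((⟨y₀, y₁⟩ − ψ(y₁))/ε) dν(y₁) for y₀ ∈ Y. If ψ⁰, ψ¹ : Y → ℝ are continuous and ψ¹ − ψ⁰ is not constant, then sup_{y₀ ∈ Y} |S(ψ¹)(y₀) − S(ψ⁰)(y₀)| < sup_{y₁ ∈ Y} |ψ¹(y₁) − ψ⁰(y₁)|; that is, the Sinkhorn update is a strict sup-norm contraction on non-constant differences. -/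

import Mathlib

open MeasureTheory
open scoped RealInnerProductSpace ENNReal

set_option maxHeartbeats 1000000 in
/-- the Sinkhorn update
`S(ψ)(y₀) = ε·log ∫_Y exp((⟪y₀, y₁⟫ - ψ y₁)/ε) dν`, for a fully supported probability
measure `ν` on a compact `Y ⊆ ℝ^d`, is a strict sup-norm contraction on non-constant
differences: if `ψ¹ - ψ⁰` is not constant on `Y` then
`sup_{y₀ ∈ Y} |S ψ¹ y₀ - S ψ⁰ y₀| < sup_{y₁ ∈ Y} |ψ¹ y₁ - ψ⁰ y₁|`. -/
theorem stmt11 {d : ℕ} (Y : Set (EuclideanSpace ℝ (Fin d))) (hY : IsCompact Y)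
    (ν : Measure (EuclideanSpace ℝ (Fin d))) [IsProbabilityMeasure ν]
    (hνY : ν Yᶜ = 0)
    (hνfull : ∀ U : Set (EuclideanSpace ℝ (Fin d)),
      IsOpen U → (U ∩ Y).Nonempty → 0 < ν (U ∩ Y))
    (ε : ℝ) (hε : 0 < ε)
    (S : (EuclideanSpace ℝ (Fin d) → ℝ) → EuclideanSpace ℝ (Fin d) → ℝ)
    (hS : ∀ ψ y₀, S ψ y₀
      = ε * Real.log (∫ y₁ in Y, Real.exp ((⟪y₀, y₁⟫ - ψ y₁) / ε) ∂ν))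
    (ψ0 ψ1 : EuclideanSpace ℝ (Fin d) → ℝ)
    (hψ0 : ContinuousOn ψ0 Y) (hψ1 : ContinuousOn ψ1 Y)
    (hnc : ¬ ∃ c : ℝ, ∀ y ∈ Y, ψ1 y - ψ0 y = c) :
    (⨆ y₀ : Y, |S ψ1 y₀ - S ψ0 y₀|) < ⨆ y₁ : Y, |ψ1 y₁ - ψ0 y₁| := by
  classical
  have hYmeas : MeasurableSet Y := hY.isClosed.measurableSet
  have hνY1 : ν Y = 1 := by
    have h := measure_add_measure_compl (μ := ν) hYmeas
    rw [hνY, add_zero] at h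
    simpa using h
  have hYne : Y.Nonempty := by
    by_contra h
    rw [Set.not_nonempty_iff_eq_empty] at h
    exact hnc ⟨0, fun y hy => by simp [h] at hy⟩
  haveI : Nonempty Y := hYne.to_subtype
  set f : EuclideanSpace ℝ (Fin d) → ℝ := fun y => ψ1 y - ψ0 y with hfdef
  have hfc : ContinuousOn f Y := hψ1.sub hψ0
  obtain ⟨Cf, hCf⟩ := hY.exists_bound_of_continuousOn hfc
  have hbdd : BddAbove (Set.range fun y : Y => |f y|) := by
    refine ⟨Cf, ?_⟩
    rintro x ⟨y, rfl⟩
    exact hCf y y.2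
  set M : ℝ := ⨆ y : Y, |f y| with hMdef
  have hMle : ∀ y ∈ Y, |f y| ≤ M := fun y hy => le_ciSup hbdd ⟨y, hy⟩
  have hfleM : ∀ y ∈ Y, f y ≤ M := fun y hy => (le_abs_self _).trans (hMle y hy)
  have hfgeM : ∀ y ∈ Y, -M ≤ f y :=
    fun y hy => (neg_le_neg (hMle y hy)).trans (neg_abs_le _)
  push_neg at hnc
  obtain ⟨yw, hyw⟩ := hYne
  have hMnn : 0 ≤ M := (abs_nonneg _).trans (hMle yw hyw)
  have hMpos : 0 < M := by
    rcases hMnn.lt_or_eq with h | h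
    · exact h
    · exfalso
      obtain ⟨ya, hya, hne⟩ := hnc (f yw)
      apply hne
      have h1 : |f ya| ≤ 0 := h ▸ hMle ya hya
      have h2 : |f yw| ≤ 0 := h ▸ hMle yw hyw
      have h1' : f ya = 0 := abs_eq_zero.mp (le_antisymm h1 (abs_nonneg _))
      have h2' : f yw = 0 := abs_eq_zero.mp (le_antisymm h2 (abs_nonneg _))
      show f ya = f yw
      rw [h1', h2']
  have hltM : ∃ y ∈ Y, f y < M := by
    by_contra h
    push_neg at h
    obtain ⟨y, hy, hne'⟩ := hnc M
    exact hne' (le_antisymm (hfleM y hy) (h y hy))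
  have hgtM : ∃ y ∈ Y, -M < f y := by
    by_contra h
    push_neg at h
    obtain ⟨y, hy, hne'⟩ := hnc (-M)
    exact hne' (le_antisymm (h y hy) (hfgeM y hy))
  -- exponential shorthands
  set eM : ℝ := Real.exp (M / ε) with heM
  set em : ℝ := Real.exp (-M / ε) with hem
  clear_value eM em
  have hexpc : ContinuousOn (fun y => Real.exp (-f y / ε)) Y :=
    Real.continuous_exp.comp_continuousOn ((hfc.neg).div_const ε)
  have hc_int : IntegrableOn (fun y => eM - Real.exp (-f y / ε)) Y ν :=
    (continuousOn_const.sub hexpc).integrableOn_compact hY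
  have hc'_int : IntegrableOn (fun y => Real.exp (-f y / ε) - em) Y ν :=
    (hexpc.sub continuousOn_const).integrableOn_compact hY
  have hfb1 : ∀ y ∈ Y, Real.exp (-f y / ε) ≤ eM := by
    intro y hy
    have h := hfgeM y hy
    rw [heM]
    gcongr <;> linarith
  have hfb2 : ∀ y ∈ Y, em ≤ Real.exp (-f y / ε) := by
    intro y hy
    have h := hfleM y hy
    rw [hem]
    gcongr <;> linarith
  have hc_pos : 0 < ∫ y in Y, (eM - Real.exp (-f y / ε)) ∂ν := by
    rw [setIntegral_pos_iff_support_of_nonneg_ae ?_ hc_int]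
    · obtain ⟨U, hUo, hUeq⟩ := (continuousOn_iff'.mp hfc) (Set.Ioi (-M)) isOpen_Ioi
      obtain ⟨y, hy, hylt⟩ := hgtM
      have hysub : y ∈ U ∩ Y := by
        rw [← hUeq]; exact ⟨hylt, hy⟩
      refine lt_of_lt_of_le (hνfull U hUo ⟨y, hysub⟩) (measure_mono ?_)
      intro z hz
      rw [← hUeq] at hz
      refine ⟨?_, hz.2⟩
      have hzlt : -M < f z := hz.1
      have hlt : Real.exp (-f z / ε) < eM := by
        rw [heM]
        gcongr <;> linarith
      simp only [Function.mem_support]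
      exact ne_of_gt (sub_pos.mpr hlt)
    · rw [Filter.EventuallyLE, ae_restrict_iff' hYmeas]
      exact ae_of_all _ fun y hy => sub_nonneg.mpr (hfb1 y hy)
  have hc'_pos : 0 < ∫ y in Y, (Real.exp (-f y / ε) - em) ∂ν := by
    rw [setIntegral_pos_iff_support_of_nonneg_ae ?_ hc'_int]
    · obtain ⟨U, hUo, hUeq⟩ := (continuousOn_iff'.mp hfc) (Set.Iio M) isOpen_Iio
      obtain ⟨y, hy, hylt⟩ := hltM
      have hysub : y ∈ U ∩ Y := by
        rw [← hUeq]; exact ⟨hylt, hy⟩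
      refine lt_of_lt_of_le (hνfull U hUo ⟨y, hysub⟩) (measure_mono ?_)
      intro z hz
      rw [← hUeq] at hz
      refine ⟨?_, hz.2⟩
      have hzlt : f z < M := hz.1
      have hlt : em < Real.exp (-f z / ε) := by
        rw [hem]
        gcongr <;> linarith
      simp only [Function.mem_support]
      exact ne_of_gt (sub_pos.mpr hlt)
    · rw [Filter.EventuallyLE, ae_restrict_iff' hYmeas]
      exact ae_of_all _ fun y hy => sub_nonneg.mpr (hfb2 y hy)
  set c : ℝ := ∫ y in Y, (eM - Real.exp (-f y / ε)) ∂ν with hcdef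
  set c' : ℝ := ∫ y in Y, (Real.exp (-f y / ε) - em) ∂ν with hc'def
  clear_value c c'
  -- uniform bounds on the kernel
  obtain ⟨R, hR⟩ := hY.exists_bound_of_continuousOn continuousOn_id
  obtain ⟨C0, hC0⟩ := hY.exists_bound_of_continuousOn hψ0
  have hR0 : 0 ≤ R := le_trans (norm_nonneg _) (hR yw hyw)
  have hC00 : 0 ≤ C0 := le_trans (norm_nonneg _) (hC0 yw hyw)
  set K : ℝ := (R * R + C0) / ε with hKdef
  have hK0 : 0 ≤ K := by positivity
  clear_value K
  set Lc : ℝ := Real.exp (-K) with hLc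
  set Uc : ℝ := Real.exp K with hUc
  have hLcpos : 0 < Lc := Real.exp_pos _
  have hUcpos : 0 < Uc := Real.exp_pos _
  have hLcUc : Lc ≤ Uc := Real.exp_le_exp.mpr (by linarith)
  clear_value Lc Uc
  set κ : ℝ := Lc * c / Uc with hκdef
  set κ' : ℝ := Lc * c' / Uc with hκ'def
  have hκpos : 0 < κ := by positivity
  have hκ'pos : 0 < κ' := by positivity
  clear_value κ κ'
  -- the key uniform pointwise estimate
  have key : ∀ y₀ ∈ Y, (0 < eM - κ) ∧
      ε * Real.log (em + κ') ≤ S ψ1 y₀ - S ψ0 y₀ ∧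
      S ψ1 y₀ - S ψ0 y₀ ≤ ε * Real.log (eM - κ) := by
    intro y₀ hy₀
    set h : EuclideanSpace ℝ (Fin d) → ℝ := fun y => Real.exp ((⟪y₀, y⟫ - ψ0 y) / ε)
      with hhdef
    have hhc : ContinuousOn h Y :=
      Real.continuous_exp.comp_continuousOn
        (((continuous_const.inner continuous_id).continuousOn.sub hψ0).div_const ε)
    have hh_int : IntegrableOn h Y ν := hhc.integrableOn_compact hY
    have hhLU : ∀ y ∈ Y, Lc ≤ h y ∧ h y ≤ Uc := by
      intro y hy
      have hip : |⟪y₀, y⟫| ≤ R * R := by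
        refine le_trans (abs_real_inner_le_norm _ _) ?_
        have h1 := hR y₀ hy₀
        have h2 := hR y hy
        simp only [id] at h1 h2
        exact mul_le_mul h1 h2 (norm_nonneg _) hR0
      have hψb : |ψ0 y| ≤ C0 := hC0 y hy
      have hb : |(⟪y₀, y⟫ - ψ0 y) / ε| ≤ K := by
        rw [hKdef, abs_div, abs_of_pos hε]
        gcongr
        calc |⟪y₀, y⟫ - ψ0 y| ≤ |⟪y₀, y⟫| + |ψ0 y| := abs_sub _ _
          _ ≤ R * R + C0 := add_le_add hip hψb
      rw [abs_le] at hb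
      constructor
      · rw [hLc]; exact Real.exp_le_exp.mpr hb.1
      · rw [hUc]; exact Real.exp_le_exp.mpr hb.2
    clear_value h
    set A : ℝ := ∫ y in Y, h y ∂ν with hAdef
    have hA_lb : Lc ≤ A := by
      have := setIntegral_mono_on
        ((integrableOn_const_iff).mpr (Or.inr (by rw [hνY1]; exact ENNReal.one_lt_top)))
        hh_int hYmeas (fun y hy => (hhLU y hy).1)
      rwa [setIntegral_const, measureReal_def, hνY1, ENNReal.toReal_one, one_smul] at this
    have hA_ub : A ≤ Uc := by
      have := setIntegral_mono_on hh_int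
        ((integrableOn_const_iff).mpr (Or.inr (by rw [hνY1]; exact ENNReal.one_lt_top)))
        hYmeas (fun y hy => (hhLU y hy).2)
      rwa [setIntegral_const, measureReal_def, hνY1, ENNReal.toReal_one, one_smul] at this
    have hApos : 0 < A := lt_of_lt_of_le hLcpos hA_lb
    have hAne : A ≠ 0 := ne_of_gt hApos
    clear_value A
    set B : ℝ := ∫ y in Y, Real.exp ((⟪y₀, y⟫ - ψ1 y) / ε) ∂ν with hBdef
    clear_value B
    have hBeq : B = ∫ y in Y, h y * Real.exp (-f y / ε) ∂ν := by
      rw [hBdef]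
      congr 1
      funext y
      rw [hhdef]
      simp only
      rw [← Real.exp_add]
      congr 1
      rw [hfdef]
      field_simp
      ring
    have hprod_int : IntegrableOn (fun y => h y * Real.exp (-f y / ε)) Y ν :=
      (hhc.mul hexpc).integrableOn_compact hY
    -- upper bound : B ≤ A * eM - Lc * c
    have hub : B ≤ A * eM - Lc * c := by
      have h1 : A * eM - B = ∫ y in Y, h y * (eM - Real.exp (-f y / ε)) ∂ν := by
        have e : (fun y => h y * (eM - Real.exp (-f y / ε)))
            = fun y => h y * eM - h y * Real.exp (-f y / ε) := by
          funext y; ring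
        rw [e, hBeq, hAdef, integral_sub (hh_int.mul_const eM) hprod_int, ← integral_mul_const]
      have h2 : Lc * c = ∫ y in Y, Lc * (eM - Real.exp (-f y / ε)) ∂ν := by
        rw [hcdef, ← integral_const_mul]
      have h3 : Lc * c ≤ A * eM - B := by
        rw [h1, h2]
        refine setIntegral_mono_on (hc_int.const_mul Lc)
          ((hhc.mul (continuousOn_const.sub hexpc)).integrableOn_compact hY)
          hYmeas ?_
        intro y hy
        have hnn : 0 ≤ eM - Real.exp (-f y / ε) := sub_nonneg.mpr (hfb1 y hy)
        exact mul_le_mul_of_nonneg_right (hhLU y hy).1 hnn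
      linarith
    -- lower bound : A * em + Lc * c' ≤ B
    have hlb : A * em + Lc * c' ≤ B := by
      have h1 : B - A * em = ∫ y in Y, h y * (Real.exp (-f y / ε) - em) ∂ν := by
        have e : (fun y => h y * (Real.exp (-f y / ε) - em))
            = fun y => h y * Real.exp (-f y / ε) - h y * em := by
          funext y; ring
        rw [e, hBeq, hAdef, integral_sub hprod_int (hh_int.mul_const em), ← integral_mul_const]
      have h2 : Lc * c' = ∫ y in Y, Lc * (Real.exp (-f y / ε) - em) ∂ν := by
        rw [hc'def, ← integral_const_mul]
      have h3 : Lc * c' ≤ B - A * em := by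
        rw [h1, h2]
        refine setIntegral_mono_on (hc'_int.const_mul Lc)
          ((hhc.mul (hexpc.sub continuousOn_const)).integrableOn_compact hY)
          hYmeas ?_
        intro y hy
        have hnn : 0 ≤ Real.exp (-f y / ε) - em := sub_nonneg.mpr (hfb2 y hy)
        exact mul_le_mul_of_nonneg_right (hhLU y hy).1 hnn
      linarith
    have hempos : 0 < em := by rw [hem]; exact Real.exp_pos _
    have hBpos : 0 < B := lt_of_lt_of_le
      (add_pos (mul_pos hApos hempos) (mul_pos hLcpos hc'_pos)) hlb
    -- ratio bounds
    have hratio_ub : B / A ≤ eM - κ := by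
      have step1 : B / A ≤ (A * eM - Lc * c) / A := by gcongr
      have step2 : (A * eM - Lc * c) / A = eM - Lc * c / A := by
        field_simp
      have step3 : Lc * c / Uc ≤ Lc * c / A := by gcongr
      rw [hκdef]
      calc B / A ≤ eM - Lc * c / A := by rw [← step2]; exact step1
        _ ≤ eM - Lc * c / Uc := by linarith
    have hratio_lb : em + κ' ≤ B / A := by
      have step1 : (A * em + Lc * c') / A ≤ B / A := by gcongr
      have step2 : (A * em + Lc * c') / A = em + Lc * c' / A := by
        field_simp
      have step3 : Lc * c' / Uc ≤ Lc * c' / A := by gcongr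
      rw [hκ'def]
      calc em + Lc * c' / Uc ≤ em + Lc * c' / A := by linarith
        _ = (A * em + Lc * c') / A := step2.symm
        _ ≤ B / A := step1
    have hEMκ : 0 < eM - κ := lt_of_lt_of_le (div_pos hBpos hApos) hratio_ub
    have hSA : S ψ0 y₀ = ε * Real.log A := by rw [hS ψ0 y₀, hAdef, hhdef]
    have hSB : S ψ1 y₀ = ε * Real.log B := by rw [hS ψ1 y₀, hBdef]
    have hdiff : S ψ1 y₀ - S ψ0 y₀ = ε * Real.log (B / A) := by
      rw [hSA, hSB, ← mul_sub, Real.log_div (ne_of_gt hBpos) hAne]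
    refine ⟨hEMκ, ?_, ?_⟩
    · rw [hdiff]
      exact mul_le_mul_of_nonneg_left
        (Real.log_le_log (by positivity) hratio_lb) hε.le
    · rw [hdiff]
      exact mul_le_mul_of_nonneg_left
        (Real.log_le_log (div_pos hBpos hApos) hratio_ub) hε.le
  obtain ⟨hEMκ, -, -⟩ := key yw hyw
  have hCup_lt : ε * Real.log (eM - κ) < M := by
    have h1 : Real.log (eM - κ) < Real.log eM :=
      Real.log_lt_log hEMκ (by linarith)
    have h2 : Real.log eM = M / ε := by rw [heM, Real.log_exp]
    calc ε * Real.log (eM - κ) < ε * Real.log eM := mul_lt_mul_of_pos_left h1 hε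
      _ = ε * (M / ε) := by rw [h2]
      _ = M := by field_simp
  have hClo_gt : -M < ε * Real.log (em + κ') := by
    have hempos : 0 < em := by rw [hem]; exact Real.exp_pos _
    have h1 : Real.log em < Real.log (em + κ') :=
      Real.log_lt_log hempos (by linarith)
    have h2 : Real.log em = -M / ε := by rw [hem, Real.log_exp]
    calc -M = ε * (-M / ε) := by field_simp
      _ = ε * Real.log em := by rw [h2]
      _ < ε * Real.log (em + κ') := mul_lt_mul_of_pos_left h1 hε
  have hfinal : ∀ y₀ : Y, |S ψ1 y₀ - S ψ0 y₀|
      ≤ max (ε * Real.log (eM - κ)) (-(ε * Real.log (em + κ'))) := by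
    intro y₀
    obtain ⟨-, hlo, hup⟩ := key y₀ y₀.2
    rw [abs_le]
    constructor
    · have := le_max_right (ε * Real.log (eM - κ)) (-(ε * Real.log (em + κ')))
      linarith
    · exact hup.trans (le_max_left _ _)
  refine lt_of_le_of_lt (ciSup_le hfinal) (max_lt hCup_lt (by linarith))
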